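/- Equivalence of stationary points under strong QI: let 𝒦 ⊆ ℝ^{mN×pN} be a linear subspace, strongly quadratically invariant with respect to G, with K·G nilpotent for every K ∈ 𝒦. Let K̄ ∈ 𝒦 and set Q̄ := (I − K̄·G)^{-1}·K̄. Then the directional derivative of J̃ at Q̄ vanishes along every direction in 𝒦 if and only if the directional derivative of J at K̄ vanishes along every direction in 𝒦; that is, ∇J̃(Q̄) ∈ 𝒦^⊥ if and only if ∇J(K̄) ∈ 𝒦^⊥. -/

import Mathlib

open Matrix

noncomputable section

section

open scoped ComplexOrder

/-- The positive semidefinite square root of a positive semidefinite matrix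
(removed from Mathlib; restored here with its old definition). -/
def Matrix.PosSemidef.sqrt {n 𝕜 : Type*} [Fintype n] [DecidableEq n] [RCLike 𝕜]
    {A : Matrix n n 𝕜} (hA : A.PosSemidef) : Matrix n n 𝕜 :=
  hA.1.eigenvectorUnitary.1 * diagonal ((↑) ∘ (√·) ∘ hA.1.eigenvalues) *
  (star hA.1.eigenvectorUnitary : Matrix n n 𝕜)

end

/-- Squared Frobenius norm of a real matrix. -/
def frobSq {a b : Type*} [Fintype a] [Fintype b] (A : Matrix a b ℝ) : ℝ :=
  ∑ i, ∑ j, (A i j) ^ 2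

/-- Squared Euclidean norm of a real vector. -/
def vecSq {a : Type*} [Fintype a] (v : a → ℝ) : ℝ :=
  ∑ i, (v i) ^ 2

/-- The finite-horizon LQG cost `J(K)` of the paper, written in terms of the
square roots `Msq = M^{1/2}`, `Swsq = Σw^{1/2}`, `Rsq = R^{1/2}`, `Svsq = Σv^{1/2}`. -/
def Jcost {nn mm pp : ℕ}
    (P11 : Matrix (Fin nn) (Fin nn) ℝ) (P12 : Matrix (Fin nn) (Fin mm) ℝ)
    (C : Matrix (Fin pp) (Fin nn) ℝ)
    (Msq Swsq : Matrix (Fin nn) (Fin nn) ℝ)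
    (Rsq : Matrix (Fin mm) (Fin mm) ℝ) (Svsq : Matrix (Fin pp) (Fin pp) ℝ)
    (μ : Fin nn → ℝ) (K : Matrix (Fin mm) (Fin pp) ℝ) : ℝ :=
  frobSq (Msq * (1 - P12 * K * C)⁻¹ * P11 * Swsq)
  + frobSq (Msq * P12 * K * (1 - C * P12 * K)⁻¹ * Svsq)
  + frobSq (Rsq * K * (1 - C * P12 * K)⁻¹ * C * P11 * Swsq)
  + frobSq (Rsq * K * (1 - C * P12 * K)⁻¹ * Svsq)
  + vecSq ((Msq * (1 - P12 * K * C)⁻¹ * P11).mulVec μ)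
  + vecSq ((Rsq * K * (1 - C * P12 * K)⁻¹ * C * P11).mulVec μ)

/-- The disturbance-feedback cost `J̃(Q)` of the paper, written in terms of the
square roots `Msq = M^{1/2}`, `Swsq = Σw^{1/2}`, `Rsq = R^{1/2}`, `Svsq = Σv^{1/2}`. -/
def Jtilde {nn mm pp : ℕ}
    (P11 : Matrix (Fin nn) (Fin nn) ℝ) (P12 : Matrix (Fin nn) (Fin mm) ℝ)
    (C : Matrix (Fin pp) (Fin nn) ℝ)
    (Msq Swsq : Matrix (Fin nn) (Fin nn) ℝ)
    (Rsq : Matrix (Fin mm) (Fin mm) ℝ) (Svsq : Matrix (Fin pp) (Fin pp) ℝ)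
    (μ : Fin nn → ℝ) (Q : Matrix (Fin mm) (Fin pp) ℝ) : ℝ :=
  frobSq (Msq * (1 + P12 * Q * C) * P11 * Swsq)
  + frobSq (Msq * P12 * Q * Svsq)
  + frobSq (Rsq * Q * C * P11 * Swsq)
  + frobSq (Rsq * Q * Svsq)
  + vecSq ((Rsq * Q * C * P11).mulVec μ)
  + vecSq ((Msq * (1 + P12 * Q * C) * P11).mulVec μ)

end

open Matrix Finset

noncomputable section SPEaux

/-- swap of powers across a rectangular product -/
lemma spe_pow_swap {m p : Type*} [Fintype m] [Fintype p] [DecidableEq m] [DecidableEq p]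
    (G : Matrix p m ℝ) (K : Matrix m p ℝ) :
    ∀ r : ℕ, (G * K) ^ (r + 1) = G * ((K * G) ^ r * K) := by
  intro r
  induction r with
  | zero => simp [Matrix.mul_assoc]
  | succ r ih =>
    rw [pow_succ, ih, pow_succ]
    simp [Matrix.mul_assoc]

lemma spe_nilp_swap {m p : Type*} [Fintype m] [Fintype p] [DecidableEq m] [DecidableEq p]
    {G : Matrix p m ℝ} {K : Matrix m p ℝ} (h : IsNilpotent (K * G)) :
    IsNilpotent (G * K) := by
  obtain ⟨r, hr⟩ := h
  exact ⟨r + 1, by rw [spe_pow_swap, hr]; simp⟩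

lemma spe_inv_geom {n : Type*} [Fintype n] [DecidableEq n]
    (X : Matrix n n ℝ) {r : ℕ} (h : X ^ r = 0) :
    (1 - X)⁻¹ = ∑ i ∈ Finset.range r, X ^ i := by
  apply Matrix.inv_eq_right_inv
  calc (1 - X) * (∑ i ∈ Finset.range r, X ^ i)
      = -((X - 1) * ∑ i ∈ Finset.range r, X ^ i) := by rw [← neg_sub, neg_mul]
    _ = -(X ^ r - 1) := by rw [mul_geom_sum]
    _ = 1 := by rw [h]; simp

lemma spe_push {m p : Type*} [Fintype m] [Fintype p] [DecidableEq m] [DecidableEq p]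
    (K : Matrix m p ℝ) (G : Matrix p m ℝ)
    (h1 : IsUnit (1 - K * G).det) (h2 : IsUnit (1 - G * K).det) :
    (1 - K * G)⁻¹ * K = K * (1 - G * K)⁻¹ := by
  have key : (1 - K * G) * (K * (1 - G * K)⁻¹) = K := by
    have h3 : (1 - K * G) * K = K * (1 - G * K) := by
      simp [Matrix.sub_mul, Matrix.mul_sub, Matrix.mul_assoc]
    rw [← Matrix.mul_assoc, h3, Matrix.mul_assoc, Matrix.mul_nonsing_inv _ h2, Matrix.mul_one]
  calc (1 - K * G)⁻¹ * K
      = (1 - K * G)⁻¹ * ((1 - K * G) * (K * (1 - G * K)⁻¹)) := by rw [key]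
    _ = ((1 - K * G)⁻¹ * (1 - K * G)) * (K * (1 - G * K)⁻¹) := by rw [Matrix.mul_assoc]
    _ = K * (1 - G * K)⁻¹ := by rw [Matrix.nonsing_inv_mul _ h1, Matrix.one_mul]

lemma spe_h1 {nn mm pp : ℕ}
    (P12 : Matrix (Fin nn) (Fin mm) ℝ) (C : Matrix (Fin pp) (Fin nn) ℝ)
    (K : Matrix (Fin mm) (Fin pp) ℝ) (B : Matrix (Fin pp) (Fin pp) ℝ)
    (h2 : K * B - K * (C * P12) * (K * B) = K) :
    (1 - P12 * K * C) * (1 + P12 * (K * B) * C) = 1 := by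
  have h3 : P12 * (K * (B * C)) - P12 * (K * (C * (P12 * (K * (B * C))))) = P12 * (K * C) := by
    have := congrArg (fun Z => P12 * (Z * C)) h2
    simpa [Matrix.mul_sub, Matrix.sub_mul, Matrix.mul_assoc] using this
  simp only [Matrix.mul_add, Matrix.add_mul, Matrix.mul_sub, Matrix.sub_mul,
    Matrix.one_mul, Matrix.mul_one, Matrix.mul_assoc]
  rw [← h3]
  abel

lemma spe_cost_eq {nn mm pp : ℕ}
    (P11 : Matrix (Fin nn) (Fin nn) ℝ) (P12 : Matrix (Fin nn) (Fin mm) ℝ)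
    (C : Matrix (Fin pp) (Fin nn) ℝ)
    (Msq Swsq : Matrix (Fin nn) (Fin nn) ℝ)
    (Rsq : Matrix (Fin mm) (Fin mm) ℝ) (Svsq : Matrix (Fin pp) (Fin pp) ℝ)
    (μ : Fin nn → ℝ) (K : Matrix (Fin mm) (Fin pp) ℝ)
    (h : IsUnit (1 - C * P12 * K).det) :
    Jcost P11 P12 C Msq Swsq Rsq Svsq μ K
      = Jtilde P11 P12 C Msq Swsq Rsq Svsq μ (K * (1 - C * P12 * K)⁻¹) := by
  have hB : (1 - C * P12 * K) * (1 - C * P12 * K)⁻¹ = 1 := Matrix.mul_nonsing_inv _ h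
  have h2 : K * (1 - C * P12 * K)⁻¹ - K * (C * P12) * (K * (1 - C * P12 * K)⁻¹) = K := by
    have e1 : K * (1 - C * P12 * K)⁻¹ - K * (C * P12) * (K * (1 - C * P12 * K)⁻¹)
        = (K * (1 - C * P12 * K)) * (1 - C * P12 * K)⁻¹ := by
      simp [Matrix.mul_sub, Matrix.sub_mul, Matrix.mul_assoc]
    rw [e1, Matrix.mul_assoc, hB, Matrix.mul_one]
  have h1 : (1 - P12 * K * C) * (1 + P12 * (K * (1 - C * P12 * K)⁻¹) * C) = 1 :=
    spe_h1 P12 C K _ h2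
  have hinv : (1 - P12 * K * C)⁻¹ = 1 + P12 * (K * (1 - C * P12 * K)⁻¹) * C :=
    Matrix.inv_eq_right_inv h1
  unfold Jcost Jtilde
  rw [hinv]
  simp only [Matrix.mul_assoc]
  ring

end SPEaux
noncomputable section SPEanalysis

open Matrix

lemma spe_ev_det {pp : ℕ} (A X : Matrix (Fin pp) (Fin pp) ℝ) (h : A.det ≠ 0) :
    ∀ᶠ t : ℝ in nhds 0, (A - t • X).det ≠ 0 := by
  have hc : ContinuousAt (fun t : ℝ => (A - t • X).det) 0 := by
    have : Continuous fun t : ℝ => A - t • X :=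
      continuous_const.sub (continuous_id.smul continuous_const)
    exact this.matrix_det.continuousAt
  exact hc.eventually_ne (by simpa using h)

attribute [local instance] Matrix.linftyOpNormedAddCommGroup Matrix.linftyOpNormedSpace
  Matrix.linftyOpNormedRing Matrix.linftyOpNormedAlgebra

/-- entry evaluation as a linear map -/
def spe_entryL {a b : Type*} [Fintype a] [Fintype b] (i : a) (j : b) :
    Matrix a b ℝ →ₗ[ℝ] ℝ where
  toFun A := A i j
  map_add' _ _ := rfl
  map_smul' _ _ := rfl

lemma spe_frobSq_diff {a b : Type*} [Fintype a] [Fintype b] :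
    Differentiable ℝ (frobSq : Matrix a b ℝ → ℝ) := by
  unfold frobSq
  apply Differentiable.fun_sum
  intro i _
  apply Differentiable.fun_sum
  intro j _
  have h : Differentiable ℝ fun A : Matrix a b ℝ => A i j :=
    (LinearMap.toContinuousLinearMap (spe_entryL i j)).differentiable
  exact h.pow 2

lemma spe_vecSq_diff {a : Type*} [Fintype a] :
    Differentiable ℝ (vecSq : (a → ℝ) → ℝ) := by
  unfold vecSq
  apply Differentiable.fun_sum
  intro i _
  have h : Differentiable ℝ fun v : a → ℝ => v i := by
    have := (ContinuousLinearMap.proj (R := ℝ) (φ := fun _ : a => ℝ) i).differentiable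
    exact this
  exact h.pow 2

/-- sandwich as linear map -/
def spe_sandwich {a b c d : Type*} [Fintype a] [Fintype b] [Fintype c] [Fintype d]
    (A : Matrix a b ℝ) (B : Matrix c d ℝ) : Matrix b c ℝ →ₗ[ℝ] Matrix a d ℝ where
  toFun Q := A * Q * B
  map_add' x y := by simp [Matrix.mul_add, Matrix.add_mul]
  map_smul' r x := by simp [Matrix.mul_smul, Matrix.smul_mul]

def spe_mulVecL {a b : Type*} [Fintype a] [Fintype b] (μ : b → ℝ) :
    Matrix a b ℝ →ₗ[ℝ] (a → ℝ) where
  toFun X := X.mulVec μ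
  map_add' x y := by ext; simp [Matrix.add_mulVec]
  map_smul' r x := by ext; simp [Matrix.smul_mulVec]

lemma spe_diff_affine {E F : Type*} [NormedAddCommGroup E] [NormedSpace ℝ E]
    [NormedAddCommGroup F] [NormedSpace ℝ F] [FiniteDimensional ℝ E]
    {g : F → ℝ} (hg : Differentiable ℝ g) (L : E →ₗ[ℝ] F) (c : F) :
    Differentiable ℝ fun x => g (L x + c) :=
  hg.comp ((LinearMap.toContinuousLinearMap L).differentiable.add_const c)

lemma spe_diff_linear {E F : Type*} [NormedAddCommGroup E] [NormedSpace ℝ E]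
    [NormedAddCommGroup F] [NormedSpace ℝ F] [FiniteDimensional ℝ E]
    {g : F → ℝ} (hg : Differentiable ℝ g) (L : E →ₗ[ℝ] F) :
    Differentiable ℝ fun x => g (L x) :=
  hg.comp (LinearMap.toContinuousLinearMap L).differentiable

lemma spe_jtilde_diff {nn mm pp : ℕ}
    (P11 : Matrix (Fin nn) (Fin nn) ℝ) (P12 : Matrix (Fin nn) (Fin mm) ℝ)
    (C : Matrix (Fin pp) (Fin nn) ℝ)
    (Msq Swsq : Matrix (Fin nn) (Fin nn) ℝ)
    (Rsq : Matrix (Fin mm) (Fin mm) ℝ) (Svsq : Matrix (Fin pp) (Fin pp) ℝ)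
    (μ : Fin nn → ℝ) :
    Differentiable ℝ (Jtilde P11 P12 C Msq Swsq Rsq Svsq μ) := by
  have e1 : ∀ Q : Matrix (Fin mm) (Fin pp) ℝ, Msq * (1 + P12 * Q * C) * P11 * Swsq
      = (spe_sandwich (Msq * P12) (C * (P11 * Swsq))) Q + Msq * (P11 * Swsq) := by
    intro Q
    simp [spe_sandwich, Matrix.mul_add, Matrix.add_mul, Matrix.one_mul, Matrix.mul_one,
      Matrix.mul_assoc, add_comm]
  have e2 : ∀ Q : Matrix (Fin mm) (Fin pp) ℝ, Msq * P12 * Q * Svsq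
      = (spe_sandwich (Msq * P12) Svsq) Q := by
    intro Q; simp [spe_sandwich, Matrix.mul_assoc]
  have e3 : ∀ Q : Matrix (Fin mm) (Fin pp) ℝ, Rsq * Q * C * P11 * Swsq
      = (spe_sandwich Rsq (C * (P11 * Swsq))) Q := by
    intro Q; simp [spe_sandwich, Matrix.mul_assoc]
  have e4 : ∀ Q : Matrix (Fin mm) (Fin pp) ℝ, Rsq * Q * Svsq
      = (spe_sandwich Rsq Svsq) Q := by
    intro Q; simp [spe_sandwich, Matrix.mul_assoc]
  have e5 : ∀ Q : Matrix (Fin mm) (Fin pp) ℝ, (Rsq * Q * C * P11).mulVec μ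
      = ((spe_mulVecL μ).comp (spe_sandwich Rsq (C * P11))) Q := by
    intro Q; simp [spe_mulVecL, spe_sandwich, Matrix.mul_assoc]
  have e6 : ∀ Q : Matrix (Fin mm) (Fin pp) ℝ, (Msq * (1 + P12 * Q * C) * P11).mulVec μ
      = ((spe_mulVecL μ).comp (spe_sandwich (Msq * P12) (C * P11))) Q + (Msq * P11).mulVec μ := by
    intro Q
    simp [spe_mulVecL, spe_sandwich, Matrix.mul_add, Matrix.add_mul, Matrix.one_mul,
      Matrix.mul_one, Matrix.add_mulVec, Matrix.mul_assoc, add_comm]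
  unfold Jtilde
  simp only [e1, e2, e3, e4, e5, e6]
  refine ((((((spe_diff_affine spe_frobSq_diff _ _).add
    (spe_diff_linear spe_frobSq_diff _)).add
    (spe_diff_linear spe_frobSq_diff _)).add
    (spe_diff_linear spe_frobSq_diff _)).add
    (spe_diff_linear spe_vecSq_diff _)).add ?_)
  exact spe_diff_affine spe_vecSq_diff _ _


def spe_lmul {a b c : Type*} [Fintype a] [Fintype b] [Fintype c]
    (A : Matrix a b ℝ) : Matrix b c ℝ →ₗ[ℝ] Matrix a c ℝ where
  toFun Q := A * Q
  map_add' x y := by simp [Matrix.mul_add]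
  map_smul' r x := by simp [Matrix.mul_smul]

lemma spe_deriv_eq {nn mm pp : ℕ}
    (P11 : Matrix (Fin nn) (Fin nn) ℝ) (P12 : Matrix (Fin nn) (Fin mm) ℝ)
    (C : Matrix (Fin pp) (Fin nn) ℝ)
    (Msq Swsq : Matrix (Fin nn) (Fin nn) ℝ)
    (Rsq : Matrix (Fin mm) (Fin mm) ℝ) (Svsq : Matrix (Fin pp) (Fin pp) ℝ)
    (μ : Fin nn → ℝ) (Kbar D : Matrix (Fin mm) (Fin pp) ℝ)
    (hnil : IsNilpotent (Kbar * (C * P12))) :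
    deriv (fun t : ℝ => Jcost P11 P12 C Msq Swsq Rsq Svsq μ (Kbar + t • D)) 0
      = deriv (fun t : ℝ => Jtilde P11 P12 C Msq Swsq Rsq Svsq μ
          ((1 - Kbar * (C * P12))⁻¹ * Kbar
            + t • ((1 - Kbar * (C * P12))⁻¹ * D * (1 - C * P12 * Kbar)⁻¹))) 0 := by
  have hnil' : IsNilpotent ((C * P12) * Kbar) := spe_nilp_swap hnil
  have hdA' : IsUnit (1 - Kbar * (C * P12)).det :=
    (Matrix.isUnit_iff_isUnit_det _).1 hnil.isUnit_one_sub
  have hdA : IsUnit (1 - (C * P12) * Kbar).det :=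
    (Matrix.isUnit_iff_isUnit_det _).1 hnil'.isUnit_one_sub
  set A : Matrix (Fin pp) (Fin pp) ℝ := 1 - C * P12 * Kbar with hAdef
  set A' : Matrix (Fin mm) (Fin mm) ℝ := 1 - Kbar * (C * P12) with hA'def
  set X : Matrix (Fin pp) (Fin pp) ℝ := C * P12 * D with hXdef
  set f : ℝ → Matrix (Fin pp) (Fin pp) ℝ := fun t => A - t • X with hfdef
  have hf0 : f 0 = A := by simp [hfdef]
  have hf : HasDerivAt f (-X) 0 := by
    have h := ((hasDerivAt_id (0:ℝ)).smul_const X).const_sub A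
    simp at h
    exact h
  have hAu : IsUnit A := (Matrix.isUnit_iff_isUnit_det _).2 hdA
  have hg : HasDerivAt (fun t => Ring.inverse (f t)) (A⁻¹ * X * A⁻¹) 0 := by
    have h0 : HasFDerivAt Ring.inverse
        (-(ContinuousLinearMap.mulLeftRight ℝ _ (↑hAu.unit⁻¹) (↑hAu.unit⁻¹))) (f 0) := by
      rw [hf0]
      nth_rewrite 3 [← hAu.unit_spec]
      exact hasFDerivAt_ringInverse hAu.unit
    have hcoe : (↑hAu.unit⁻¹ : Matrix (Fin pp) (Fin pp) ℝ) = A⁻¹ := by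
      rw [Matrix.coe_units_inv, hAu.unit_spec]
    have hcomp := h0.comp_hasDerivAt 0 hf
    simp [hcoe, ContinuousLinearMap.neg_apply, ContinuousLinearMap.mulLeftRight_apply,
      neg_mul, mul_neg, neg_neg] at hcomp
    exact hcomp
  set q : ℝ → Matrix (Fin mm) (Fin pp) ℝ := fun t => (Kbar + t • D) * Ring.inverse (f t)
    with hqdef
  have hp1 : HasDerivAt (fun t => Kbar * Ring.inverse (f t)) (Kbar * (A⁻¹ * X * A⁻¹)) 0 := by
    have := ((LinearMap.toContinuousLinearMap
      (spe_lmul (c := Fin pp) Kbar)).hasFDerivAt).comp_hasDerivAt 0 hg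
    simp [spe_lmul] at this
    exact this
  have hp2' : HasDerivAt (fun t => D * Ring.inverse (f t)) (D * (A⁻¹ * X * A⁻¹)) 0 := by
    have := ((LinearMap.toContinuousLinearMap
      (spe_lmul (c := Fin pp) D)).hasFDerivAt).comp_hasDerivAt 0 hg
    simp [spe_lmul] at this
    exact this
  have hp2 : HasDerivAt (fun t : ℝ => t • (D * Ring.inverse (f t))) (D * A⁻¹) 0 := by
    have := (hasDerivAt_id (0:ℝ)).smul hp2'
    rw [hf0, ← Matrix.nonsing_inv_eq_ringInverse] at this
    simp only [id, zero_smul, one_smul, zero_add] at this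
    exact this
  have hqd0 : HasDerivAt q (Kbar * (A⁻¹ * X * A⁻¹) + D * A⁻¹) 0 := by
    have e : q = fun t => Kbar * Ring.inverse (f t) + t • (D * Ring.inverse (f t)) := by
      funext t; simp [hqdef, Matrix.add_mul, Matrix.smul_mul]
    rw [e]; exact hp1.add hp2
  have hpush : A'⁻¹ * Kbar = Kbar * A⁻¹ := spe_push Kbar (C * P12) hdA' hdA
  have hid : (1 : Matrix (Fin mm) (Fin mm) ℝ) + A'⁻¹ * (Kbar * (C * P12)) = A'⁻¹ := by
    have h := Matrix.nonsing_inv_mul A' hdA'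
    have h2 : A'⁻¹ - A'⁻¹ * (Kbar * (C * P12)) = 1 := by
      rw [hA'def] at h
      simpa [Matrix.mul_sub, Matrix.mul_one] using h
    calc (1 : Matrix (Fin mm) (Fin mm) ℝ) + A'⁻¹ * (Kbar * (C * P12))
        = (A'⁻¹ - A'⁻¹ * (Kbar * (C * P12))) + A'⁻¹ * (Kbar * (C * P12)) := by rw [h2]
      _ = A'⁻¹ := by abel
  have hE : Kbar * (A⁻¹ * X * A⁻¹) + D * A⁻¹ = A'⁻¹ * D * A⁻¹ := by
    have h1 : Kbar * (A⁻¹ * X * A⁻¹) = A'⁻¹ * (Kbar * (C * P12)) * (D * A⁻¹) := by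
      rw [hXdef,
        show A'⁻¹ * (Kbar * (C * P12)) = Kbar * A⁻¹ * (C * P12) from by
          rw [← Matrix.mul_assoc, hpush]]
      simp only [Matrix.mul_assoc]
    rw [h1]
    nth_rewrite 2 [← Matrix.one_mul (D * A⁻¹)]
    rw [← Matrix.add_mul, add_comm, hid, Matrix.mul_assoc]
  have hqd : HasDerivAt q (A'⁻¹ * D * A⁻¹) 0 := hE ▸ hqd0
  have hq0 : q 0 = A'⁻¹ * Kbar := by
    rw [hpush]
    simp [hqdef, hf0, ← Matrix.nonsing_inv_eq_ringInverse]
  have hJd := spe_jtilde_diff P11 P12 C Msq Swsq Rsq Svsq μ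
  set Jt := Jtilde P11 P12 C Msq Swsq Rsq Svsq μ with hJtdef
  set E : Matrix (Fin mm) (Fin pp) ℝ := A'⁻¹ * D * A⁻¹ with hEdef
  have hc1 : HasDerivAt (fun t => Jt (q t)) (fderiv ℝ Jt (A'⁻¹ * Kbar) E) 0 := by
    have hF := (hJd (q 0)).hasFDerivAt
    have := hF.comp_hasDerivAt 0 hqd
    rwa [hq0] at this
  have hline : HasDerivAt (fun t : ℝ => A'⁻¹ * Kbar + t • E) E 0 := by
    have h := ((hasDerivAt_id (0:ℝ)).smul_const E).const_add (A'⁻¹ * Kbar)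
    simp only [id, one_smul] at h
    exact h
  have hc2 : HasDerivAt (fun t : ℝ => Jt (A'⁻¹ * Kbar + t • E))
      (fderiv ℝ Jt (A'⁻¹ * Kbar) E) 0 := by
    have := ((hJd (A'⁻¹ * Kbar + (0:ℝ) • E)).hasFDerivAt).comp_hasDerivAt 0 hline
    rw [zero_smul, add_zero] at this
    exact this
  have hev : (fun t : ℝ => Jcost P11 P12 C Msq Swsq Rsq Svsq μ (Kbar + t • D))
      =ᶠ[nhds 0] fun t => Jt (q t) := by
    filter_upwards [spe_ev_det A X hdA.ne_zero] with t ht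
    have hft : (1 : Matrix (Fin pp) (Fin pp) ℝ) - C * P12 * (Kbar + t • D) = f t := by
      simp [hfdef, hAdef, hXdef, Matrix.mul_add, Matrix.mul_smul, sub_sub]
    have hu : IsUnit ((1 : Matrix (Fin pp) (Fin pp) ℝ) - C * P12 * (Kbar + t • D)).det := by
      rw [hft]; exact isUnit_iff_ne_zero.2 ht
    rw [spe_cost_eq _ _ _ _ _ _ _ _ _ hu, hJtdef]
    congr 1
    rw [hft, Matrix.nonsing_inv_eq_ringInverse]
  calc deriv (fun t : ℝ => Jcost P11 P12 C Msq Swsq Rsq Svsq μ (Kbar + t • D)) 0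
      = deriv (fun t => Jt (q t)) 0 := hev.deriv_eq
    _ = fderiv ℝ Jt (A'⁻¹ * Kbar) E := hc1.deriv
    _ = deriv (fun t : ℝ => Jt (A'⁻¹ * Kbar + t • E)) 0 := hc2.deriv.symm

end SPEanalysis
/-- Equivalence of stationary points under strong QI: let `𝒦` be a strongly
quadratically invariant subspace with `K·G` nilpotent on `𝒦` (`G = C·P12`), let `Kbar ∈ 𝒦`
and `Qbar := (I − Kbar·G)⁻¹·Kbar`. Then the directional derivative of `J̃` at `Qbar` vanishes
along every direction in `𝒦` iff the directional derivative of `J` at `Kbar` vanishes along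
every direction in `𝒦`, i.e. `∇J̃(Qbar) ∈ 𝒦^⊥ ↔ ∇J(Kbar) ∈ 𝒦^⊥`. -/
theorem stationary_points_equivalence {n m p N : ℕ}
    (hn : 0 < n) (hm : 0 < m) (hp : 0 < p) (hN : 0 < N)
    (P11 : Matrix (Fin (n * (N + 1))) (Fin (n * (N + 1))) ℝ)
    (P12 : Matrix (Fin (n * (N + 1))) (Fin (m * N)) ℝ)
    (C : Matrix (Fin (p * N)) (Fin (n * (N + 1))) ℝ)
    {M W : Matrix (Fin (n * (N + 1))) (Fin (n * (N + 1))) ℝ}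
    {R : Matrix (Fin (m * N)) (Fin (m * N)) ℝ}
    {V : Matrix (Fin (p * N)) (Fin (p * N)) ℝ}
    (hM : M.PosSemidef) (hW : W.PosSemidef) (hR : R.PosDef) (hV : V.PosDef)
    (μ : Fin (n * (N + 1)) → ℝ)
    (G : Matrix (Fin (p * N)) (Fin (m * N)) ℝ) (hG : G = C * P12)
    (𝒦 : Submodule ℝ (Matrix (Fin (m * N)) (Fin (p * N)) ℝ))
    (hSQI : ∀ K₁ ∈ 𝒦, ∀ K₂ ∈ 𝒦, K₁ * G * K₂ ∈ 𝒦)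
    (hnilp : ∀ K ∈ 𝒦, IsNilpotent (K * G))
    (Kbar : Matrix (Fin (m * N)) (Fin (p * N)) ℝ) (hKbar : Kbar ∈ 𝒦)
    (Qbar : Matrix (Fin (m * N)) (Fin (p * N)) ℝ) (hQbar : Qbar = (1 - Kbar * G)⁻¹ * Kbar) :
    (∀ D ∈ 𝒦, deriv (fun t : ℝ =>
        Jtilde P11 P12 C hM.sqrt hW.sqrt hR.posSemidef.sqrt hV.posSemidef.sqrt μ
          (Qbar + t • D)) 0 = 0) ↔
    (∀ D ∈ 𝒦, deriv (fun t : ℝ =>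
        Jcost P11 P12 C hM.sqrt hW.sqrt hR.posSemidef.sqrt hV.posSemidef.sqrt μ
          (Kbar + t • D)) 0 = 0) := by
    subst hG
    subst hQbar
    obtain ⟨r, hr⟩ := hnilp Kbar hKbar
    have hswap : (C * P12 * Kbar) ^ (r + 1) = 0 := by
      rw [spe_pow_swap, hr]; simp
    have hdA' : IsUnit (1 - Kbar * (C * P12)).det :=
      (Matrix.isUnit_iff_isUnit_det _).1 (hnilp Kbar hKbar).isUnit_one_sub
    have hdA : IsUnit (1 - C * P12 * Kbar).det :=
      (Matrix.isUnit_iff_isUnit_det _).1 (spe_nilp_swap (hnilp Kbar hKbar)).isUnit_one_sub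
    have hleft : ∀ i : ℕ, ∀ Z ∈ 𝒦, (Kbar * (C * P12)) ^ i * Z ∈ 𝒦 := by
      intro i
      induction i with
      | zero => intro Z hZ; simpa using hZ
      | succ i ih =>
        intro Z hZ
        rw [pow_succ', Matrix.mul_assoc]
        exact hSQI Kbar hKbar _ (ih Z hZ)
    have hright : ∀ j : ℕ, ∀ Z ∈ 𝒦, Z * (C * P12 * Kbar) ^ j ∈ 𝒦 := by
      intro j
      induction j with
      | zero => intro Z hZ; simpa using hZ
      | succ j ih =>
        intro Z hZ
        rw [pow_succ, ← Matrix.mul_assoc, ← Matrix.mul_assoc]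
        exact hSQI _ (ih Z hZ) Kbar hKbar
    have hTmem : ∀ Dp ∈ 𝒦,
        (1 - Kbar * (C * P12))⁻¹ * Dp * (1 - C * P12 * Kbar)⁻¹ ∈ 𝒦 := by
      intro Dp hDp
      rw [spe_inv_geom _ hr, spe_inv_geom _ hswap, Matrix.sum_mul, Matrix.sum_mul]
      simp only [Matrix.mul_sum]
      apply Submodule.sum_mem
      intro i _
      apply Submodule.sum_mem
      intro j _
      exact hright j _ (hleft i Dp hDp)
    have hTinvmem : ∀ Dp ∈ 𝒦,
        (1 - Kbar * (C * P12)) * Dp * (1 - C * P12 * Kbar) ∈ 𝒦 := by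
      intro Dp hDp
      have hW : Dp - Kbar * (C * P12) * Dp ∈ 𝒦 := sub_mem hDp (hSQI Kbar hKbar Dp hDp)
      have hx2 : (Dp - Kbar * (C * P12) * Dp) * (C * P12) * Kbar ∈ 𝒦 := hSQI _ hW Kbar hKbar
      have e : (1 - Kbar * (C * P12)) * Dp * (1 - C * P12 * Kbar)
          = (Dp - Kbar * (C * P12) * Dp) - (Dp - Kbar * (C * P12) * Dp) * (C * P12) * Kbar := by
        simp only [Matrix.sub_mul, Matrix.mul_sub, Matrix.one_mul, Matrix.mul_one,
          Matrix.mul_assoc]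
      rw [e]
      exact sub_mem hW hx2
    have key : ∀ Dp : Matrix (Fin (m * N)) (Fin (p * N)) ℝ,
        deriv (fun t : ℝ =>
          Jcost P11 P12 C hM.sqrt hW.sqrt hR.posSemidef.sqrt hV.posSemidef.sqrt μ
            (Kbar + t • Dp)) 0
        = deriv (fun t : ℝ =>
          Jtilde P11 P12 C hM.sqrt hW.sqrt hR.posSemidef.sqrt hV.posSemidef.sqrt μ
            ((1 - Kbar * (C * P12))⁻¹ * Kbar
              + t • ((1 - Kbar * (C * P12))⁻¹ * Dp * (1 - C * P12 * Kbar)⁻¹))) 0 :=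
      fun Dp => spe_deriv_eq _ _ _ _ _ _ _ _ _ _ (hnilp Kbar hKbar)
    constructor
    · intro h D hD
      rw [key D]
      exact h _ (hTmem D hD)
    · intro h D hD
      have hrw : (1 - Kbar * (C * P12))⁻¹
          * ((1 - Kbar * (C * P12)) * D * (1 - C * P12 * Kbar))
          * (1 - C * P12 * Kbar)⁻¹ = D := by
        rw [Matrix.mul_assoc (1 - Kbar * (C * P12)) D (1 - C * P12 * Kbar),
          ← Matrix.mul_assoc ((1 - Kbar * (C * P12))⁻¹) (1 - Kbar * (C * P12))
            (D * (1 - C * P12 * Kbar)),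
          Matrix.nonsing_inv_mul _ hdA', Matrix.one_mul,
          Matrix.mul_assoc D (1 - C * P12 * Kbar) ((1 - C * P12 * Kbar)⁻¹),
          Matrix.mul_nonsing_inv _ hdA, Matrix.mul_one]
      have hkey := key ((1 - Kbar * (C * P12)) * D * (1 - C * P12 * Kbar))
      rw [hrw] at hkey
      rw [← hkey]
      exact h _ (hTinvmem D hD)
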